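/- Let d ≥ 1, n ≥ 1, and let A be any d×d complex matrix. Then tr[Π_n A^{⊗n}] = (1/n)·Σ_{j=1}^{n} tr[A^j] · tr[Π_{n−j} A^{⊗(n−j)}], where the j = n term is interpreted with tr[Π₀ A^{⊗0}] := 1. (Recursion for the success probability p_n of the symmetric-projection protocol, Lemma S1, part 1.) -/

import Mathlib

open Matrix

/-- Permutation matrix on `(ℂ^d)^{⊗n}` permuting tensor factors. -/
noncomputable def permMat (n d : ℕ) (σ : Equiv.Perm (Fin n)) :
    Matrix (Fin n → Fin d) (Fin n → Fin d) ℂ :=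
  Matrix.of fun v w => if v = w ∘ σ then 1 else 0

/-- Projector onto the symmetric subspace of `(ℂ^d)^{⊗n}`. -/
noncomputable def symProj (n d : ℕ) :
    Matrix (Fin n → Fin d) (Fin n → Fin d) ℂ :=
  ((n.factorial : ℂ)⁻¹) • ∑ σ : Equiv.Perm (Fin n), permMat n d σ

/-- `n`-fold tensor (Kronecker) power of a `d×d` matrix. -/
noncomputable def tpow {d : ℕ} (A : Matrix (Fin d) (Fin d) ℂ) (n : ℕ) :
    Matrix (Fin n → Fin d) (Fin n → Fin d) ℂ :=
  Matrix.of fun v w => ∏ i, A (v i) (w i)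

noncomputable section Stmt3Aux

variable {d : ℕ} (A B : Matrix (Fin d) (Fin d) ℂ)

/-- Weight of a permutation: `∑_v ∏_i A (v i) (v (σ i))`. -/
def Tw {m : ℕ} (σ : Equiv.Perm (Fin m)) : ℂ :=
  ∑ v : Fin m → Fin d, ∏ i, A (v i) (v (σ i))

/-- Marked weight: the factor entering `q` uses `B` instead of `A`. -/
def Vw {m : ℕ} (q : Fin m) (σ : Equiv.Perm (Fin m)) : ℂ :=
  ∑ v : Fin m → Fin d, ∏ i, (if i = σ⁻¹ q then B else A) (v i) (v (σ i))

def Gm (m : ℕ) : ℂ := ∑ σ : Equiv.Perm (Fin m), Tw A σ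

def Hm (m : ℕ) : ℂ := ∑ σ : Equiv.Perm (Fin (m + 1)), Vw A B 0 σ

lemma Vw_self {m : ℕ} (q : Fin m) (σ : Equiv.Perm (Fin m)) : Vw A A q σ = Tw A σ := by
  simp [Vw, Tw]

lemma Gm_zero : Gm (d := d) A 0 = 1 := by
  simp [Gm, Tw]

lemma Vw_congr {m : ℕ} (e : Equiv.Perm (Fin m)) (q : Fin m) (σ : Equiv.Perm (Fin m)) :
    Vw A B (e q) (e * σ * e⁻¹) = Vw A B q σ := by
  unfold Vw
  refine Fintype.sum_equiv (Equiv.arrowCongr (e.symm : Fin m ≃ Fin m) (Equiv.refl (Fin d)))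
    _ _ (fun v => ?_)
  refine (Equiv.prod_comp e _).symm.trans ?_
  refine Finset.prod_congr rfl (fun j _ => ?_)
  have h1 : (e * σ * e⁻¹)⁻¹ (e q) = e (σ⁻¹ q) := by
    simp [mul_assoc, Equiv.Perm.mul_apply]
  rw [h1]
  simp [Equiv.Perm.mul_apply, e.injective.eq_iff]

lemma Vsum_indep {m : ℕ} (q q' : Fin m) :
    ∑ σ : Equiv.Perm (Fin m), Vw A B q σ = ∑ σ : Equiv.Perm (Fin m), Vw A B q' σ := by
  set e := Equiv.swap q q' with he
  calc ∑ σ : Equiv.Perm (Fin m), Vw A B q σ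
      = ∑ σ : Equiv.Perm (Fin m), Vw A B q' (e * σ * e⁻¹) := by
        refine Finset.sum_congr rfl (fun σ _ => ?_)
        rw [← Vw_congr A B e q σ, he, Equiv.swap_apply_left]
    _ = ∑ σ : Equiv.Perm (Fin m), Vw A B q' σ :=
        Equiv.sum_comp ((Equiv.mulLeft e).trans (Equiv.mulRight e⁻¹)) (Vw A B q')

lemma Vw_decompose_zero {m : ℕ} (τ : Equiv.Perm (Fin m)) :
    Vw A B 0 (Equiv.Perm.decomposeFin.symm (0, τ)) = B.trace * Tw A τ := by
  set σ := Equiv.Perm.decomposeFin.symm (0, τ) with hσdef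
  have hσ0 : σ 0 = 0 := Equiv.Perm.decomposeFin_symm_apply_zero _ _
  have hσs : ∀ i : Fin m, σ i.succ = (τ i).succ := by
    intro i
    rw [hσdef, Equiv.Perm.decomposeFin_symm_apply_succ, Equiv.swap_self, Equiv.refl_apply]
  have hσinv : σ⁻¹ 0 = 0 := by rw [Equiv.Perm.inv_eq_iff_eq, hσ0]
  unfold Vw
  rw [← Equiv.sum_comp (Fin.consEquiv fun _ => Fin d)
    (fun v => ∏ i, (if i = σ⁻¹ 0 then B else A) (v i) (v (σ i))), Fintype.sum_prod_type]
  have key : ∀ (x : Fin d) (w : Fin m → Fin d),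
      (∏ i, (if i = σ⁻¹ 0 then B else A) ((Fin.consEquiv fun _ => Fin d) (x, w) i)
        ((Fin.consEquiv fun _ => Fin d) (x, w) (σ i)))
      = B x x * ∏ i, A (w i) (w (τ i)) := by
    intro x w
    simp only [Fin.consEquiv_apply, Fin.prod_univ_succ, hσinv, hσ0, hσs, Fin.cons_zero,
      Fin.cons_succ, if_pos rfl, Fin.succ_ne_zero, if_neg (Fin.succ_ne_zero _), if_true,
      if_false]
  simp only [key]
  rw [← Finset.sum_mul_sum]
  rw [Matrix.trace]
  unfold Tw
  rfl

lemma Vw_decompose_succ {m : ℕ} (p : Fin m) (τ : Equiv.Perm (Fin m)) :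
    Vw A B 0 (Equiv.Perm.decomposeFin.symm (p.succ, τ)) = Vw A (B * A) p τ := by
  set σ := Equiv.Perm.decomposeFin.symm (p.succ, τ) with hσdef
  have hσ0 : σ 0 = p.succ := Equiv.Perm.decomposeFin_symm_apply_zero _ _
  have hσs : ∀ i : Fin m, σ i.succ = if i = τ⁻¹ p then 0 else (τ i).succ := by
    intro i
    rw [hσdef, Equiv.Perm.decomposeFin_symm_apply_succ]
    rcases eq_or_ne i (τ⁻¹ p) with h | h
    · subst h
      rw [if_pos rfl, show τ (τ⁻¹ p) = p from τ.apply_symm_apply p, Equiv.swap_apply_right]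
    · rw [if_neg h, Equiv.swap_apply_of_ne_of_ne (Fin.succ_ne_zero _)]
      simp only [ne_eq, Fin.succ_inj]
      exact fun hh => h (by rw [← hh, show τ⁻¹ (τ i) = i from τ.symm_apply_apply i])
  have hσinv : σ⁻¹ 0 = (τ⁻¹ p).succ := by
    rw [Equiv.Perm.inv_eq_iff_eq, hσs, if_pos rfl]
  unfold Vw
  rw [← Equiv.sum_comp (Fin.consEquiv fun _ => Fin d)
    (fun v => ∏ i, (if i = σ⁻¹ 0 then B else A) (v i) (v (σ i))), Fintype.sum_prod_type]
  have key : ∀ (x : Fin d) (w : Fin m → Fin d),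
      (∏ i, (if i = σ⁻¹ 0 then B else A) ((Fin.consEquiv fun _ => Fin d) (x, w) i)
        ((Fin.consEquiv fun _ => Fin d) (x, w) (σ i)))
      = A x (w p) * ((B (w (τ⁻¹ p)) x) *
          ∏ i ∈ Finset.univ.erase (τ⁻¹ p), A (w i) (w (τ i))) := by
    intro x w
    simp only [Fin.consEquiv_apply, Fin.prod_univ_succ, hσinv, hσ0, hσs, Fin.cons_zero,
      Fin.cons_succ, if_neg (Fin.succ_ne_zero (τ⁻¹ p)).symm, Fin.succ_inj]
    congr 1
    calc (∏ i : Fin m, (if i = τ⁻¹ p then B else A) (w i)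
            ((Fin.cons x w : Fin (m + 1) → Fin d) (if i = τ⁻¹ p then 0 else (τ i).succ)))
        = ∏ i : Fin m, (if i = τ⁻¹ p then B (w i) x else A (w i) (w (τ i))) := by
          refine Finset.prod_congr rfl (fun i _ => ?_)
          rcases eq_or_ne i (τ⁻¹ p) with h | h
          · rw [if_pos h, if_pos h, if_pos h, Fin.cons_zero]
          · rw [if_neg h, if_neg h, if_neg h, Fin.cons_succ]
      _ = B (w (τ⁻¹ p)) x * ∏ i ∈ Finset.univ.erase (τ⁻¹ p), A (w i) (w (τ i)) := by
          rw [← Finset.mul_prod_erase Finset.univ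
            (fun i => if i = τ⁻¹ p then B (w i) x else A (w i) (w (τ i)))
            (Finset.mem_univ (τ⁻¹ p)), if_pos rfl]
          congr 1
          exact Finset.prod_congr rfl fun i hi => by rw [if_neg (Finset.mem_erase.1 hi).1]
  simp only [key]
  rw [Finset.sum_comm]
  refine Finset.sum_congr rfl (fun w _ => ?_)
  have hext : ∏ i, (if i = τ⁻¹ p then B * A else A) (w i) (w (τ i))
      = (B * A) (w (τ⁻¹ p)) (w p) * ∏ i ∈ Finset.univ.erase (τ⁻¹ p), A (w i) (w (τ i)) := by
    rw [← Finset.mul_prod_erase Finset.univ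
        (fun i => (if i = τ⁻¹ p then B * A else A) (w i) (w (τ i))) (Finset.mem_univ (τ⁻¹ p)),
      if_pos rfl, show τ (τ⁻¹ p) = p from τ.apply_symm_apply p]
    congr 1
    exact Finset.prod_congr rfl fun i hi => by rw [if_neg (Finset.mem_erase.1 hi).1]
  rw [hext, Matrix.mul_apply, Finset.sum_mul]
  exact Finset.sum_congr rfl fun x _ => by ring

lemma Hm_rec (m : ℕ) :
    Hm A B m = B.trace * Gm A m + ∑ p : Fin m, ∑ τ : Equiv.Perm (Fin m), Vw A (B * A) p τ := by
  unfold Hm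
  rw [← Equiv.sum_comp (Equiv.Perm.decomposeFin.symm :
      (Fin (m + 1) × Equiv.Perm (Fin m)) ≃ _) (Vw A B 0),
    Fintype.sum_prod_type, Fin.sum_univ_succ]
  simp only [Vw_decompose_zero, Vw_decompose_succ, ← Finset.mul_sum]
  rfl

lemma Hm_zero : Hm A B 0 = B.trace := by
  rw [Hm_rec, Gm_zero]
  simp

lemma Hm_succ (m : ℕ) :
    Hm A B (m + 1) = B.trace * Gm A (m + 1) + (m + 1) * Hm A (B * A) m := by
  rw [Hm_rec]
  congr 1
  calc ∑ p : Fin (m + 1), ∑ τ : Equiv.Perm (Fin (m + 1)), Vw A (B * A) p τ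
      = ∑ _p : Fin (m + 1), ∑ τ : Equiv.Perm (Fin (m + 1)), Vw A (B * A) 0 τ :=
        Finset.sum_congr rfl fun p _ => Vsum_indep A (B * A) p 0
    _ = (m + 1) * Hm A (B * A) m := by
        rw [Finset.sum_const, Finset.card_univ, Fintype.card_fin, nsmul_eq_mul]
        push_cast
        rfl

lemma Gm_succ (m : ℕ) : Gm A (m + 1) = Hm A A m := by
  simp only [Gm, Hm, Vw_self]

lemma Hm_unroll (m : ℕ) : ∀ B, Hm A B m =
    ∑ j ∈ Finset.range (m + 1),
      (Nat.descFactorial m j : ℂ) * (B * A ^ j).trace * Gm A (m - j) := by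
  induction m with
  | zero =>
    intro B
    simp [Hm_zero, Gm_zero]
  | succ m ih =>
    intro B
    rw [Hm_succ, ih (B * A), Finset.mul_sum]
    conv_rhs => rw [Finset.sum_range_succ']
    rw [add_comm]
    congr 1
    · refine Finset.sum_congr rfl fun j _ => ?_
      have h2 : B * A * A ^ j = B * A ^ (j + 1) := by
        rw [pow_succ', mul_assoc]
      have h3 : m + 1 - (j + 1) = m - j := Nat.succ_sub_succ m j
      rw [h2, h3, Nat.succ_descFactorial_succ]
      push_cast
      ring
    · simp

lemma trace_tpow (n : ℕ) :
    (symProj n d * tpow A n).trace = ((n.factorial : ℂ))⁻¹ * Gm A n := by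
  unfold symProj
  rw [Matrix.smul_mul, Matrix.trace_smul, Finset.sum_mul, Matrix.trace_sum, smul_eq_mul]
  congr 1
  unfold Gm
  refine Finset.sum_congr rfl fun σ _ => ?_
  rw [Matrix.trace]
  unfold Tw
  refine Finset.sum_congr rfl fun v _ => ?_
  rw [Matrix.diag_apply, Matrix.mul_apply]
  have hstep : ∀ w : Fin n → Fin d,
      permMat n d σ v w * tpow A n w v
        = if w = v ∘ ⇑σ⁻¹ then ∏ i, A (v (σ⁻¹ i)) (v i) else 0 := by
    intro w
    rcases eq_or_ne w (v ∘ ⇑σ⁻¹) with h | h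
    · subst h
      rw [if_pos rfl]
      have hv : v = (v ∘ ⇑σ⁻¹) ∘ ⇑σ := by
        funext i; simp
      rw [permMat, tpow]
      simp only [Matrix.of_apply]
      rw [if_pos hv, one_mul]
      rfl
    · rw [if_neg h, permMat, Matrix.of_apply, if_neg, zero_mul]
      intro hv
      apply h
      funext i
      rw [hv]
      simp
  rw [Finset.sum_congr rfl fun w _ => hstep w, Finset.sum_ite_eq' Finset.univ,
    if_pos (Finset.mem_univ _)]
  exact (Equiv.prod_comp σ fun i => A (v (σ⁻¹ i)) (v i)).symm.trans
    (Finset.prod_congr rfl fun i _ => by rw [show σ⁻¹ (σ i) = i from σ.symm_apply_apply i])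

end Stmt3Aux

theorem stmt3 (d n : ℕ) (hd : 1 ≤ d) (hn : 1 ≤ n) (A : Matrix (Fin d) (Fin d) ℂ) :
    (symProj n d * tpow A n).trace
      = (n : ℂ)⁻¹ * ∑ j ∈ Finset.Icc 1 n, (A ^ j).trace *
          (if n - j = 0 then 1 else (symProj (n - j) d * tpow A (n - j)).trace) := by
  obtain ⟨m, rfl⟩ : ∃ m, n = m + 1 := ⟨n - 1, (Nat.succ_pred_eq_of_pos hn).symm⟩
  rw [trace_tpow, Gm_succ, Hm_unroll]
  rw [show Finset.Icc 1 (m + 1) = Finset.Ico 1 (m + 2) from (Finset.Ico_add_one_right_eq_Icc 1 (m+1)).symm,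
    Finset.sum_Ico_eq_sum_range]
  norm_num
  rw [Finset.mul_sum, Finset.mul_sum]
  refine Finset.sum_congr rfl fun j hj => ?_
  have hj' : j ≤ m := by have := Finset.mem_range.1 hj; omega
  rw [Nat.add_comm 1 j, show m + 1 - (j + 1) = m - j from by omega,
    show A * A ^ j = A ^ (j + 1) from (pow_succ' A j).symm]
  have f1 : ∀ k : ℕ, ((k.factorial : ℕ) : ℂ) ≠ 0 :=
    fun k => Nat.cast_ne_zero.2 (Nat.factorial_ne_zero _)
  have f3 : ((m : ℂ) + 1) ≠ 0 := by
    have : ((m + 1 : ℕ) : ℂ) ≠ 0 := Nat.cast_ne_zero.2 (Nat.succ_ne_zero m)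
    push_cast at this
    exact this
  have fd : ((m.descFactorial j : ℕ) : ℂ) ≠ 0 :=
    Nat.cast_ne_zero.2 (by rw [Ne, Nat.descFactorial_eq_zero_iff_lt]; omega)
  have hfac : (((m - j).factorial : ℕ) : ℂ) * ((m.descFactorial j : ℕ) : ℂ)
      = ((m.factorial : ℕ) : ℂ) := by
    exact_mod_cast congrArg (Nat.cast (R := ℂ)) (Nat.factorial_mul_descFactorial hj')
  have hfacs : (((m + 1).factorial : ℕ) : ℂ) = ((m : ℂ) + 1) * ((m.factorial : ℕ) : ℂ) := by
    rw [Nat.factorial_succ]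
    push_cast
    ring
  have hif : (if m - j = 0 then (A ^ (j + 1)).trace
        else (A ^ (j + 1)).trace * (symProj (m - j) d * tpow A (m - j)).trace)
      = (A ^ (j + 1)).trace * ((((m - j).factorial : ℕ) : ℂ)⁻¹ * Gm A (m - j)) := by
    rcases eq_or_ne (m - j) 0 with h | h
    · rw [if_pos h, h, Gm_zero]
      simp
    · rw [if_neg h, trace_tpow]
  rw [hif]
  have key : (((m + 1).factorial : ℕ) : ℂ)⁻¹ * ((m.descFactorial j : ℕ) : ℂ)
      = ((m : ℂ) + 1)⁻¹ * (((m - j).factorial : ℕ) : ℂ)⁻¹ := by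
    have hprod : (((m + 1).factorial : ℕ) : ℂ)
        = (((m : ℂ) + 1) * (((m - j).factorial : ℕ) : ℂ)) * ((m.descFactorial j : ℕ) : ℂ) := by
      rw [hfacs, ← hfac]
      ring
    rw [hprod, mul_inv, mul_assoc, inv_mul_cancel₀ fd, mul_one, mul_inv]
  linear_combination ((A ^ (j + 1)).trace * Gm A (m - j)) * key
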